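/- Let Θ, Θ̃ : [0,∞) → ℝ^N be two solutions of the inertial Kuramoto model for N identical oscillators with all-to-all coupling (parameters m, γ, κ > 0), with Σ_i θ_i(0) = Σ_i θ̃_i(0) = 0 and Σ_i ω_i(0) = Σ_i ω̃_i(0) = 0. Suppose γ > 1/2 and that there exists S ∈ (0, π) with D(Θ(t)) + D(Θ̃(t)) ≤ S for all t ≥ 0; set Γ̃ := sin(S)/S, and let ε satisfy κ/(2Γ̃) < ε < (2γ − 1)/(2m). Then, with X := Θ − Θ̃, V := Ω − Ω̃ and E_ε(t) := ε·γ·‖X(t)‖² + 2mε·⟨X(t), V(t)⟩ + m·‖V(t)‖², there exists a constant C₃ > 0 such that E_ε(t) ≤ E_ε(0)·e^{−C₃·t} for all t ≥ 0. -/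

import Mathlib

/-- The phase diameter of a configuration `Θ : Fin N → ℝ`:
`D(Θ) = max_{i,j} (Θ_i − Θ_j)`. -/
noncomputable def phaseDiam {N : ℕ} (Θ : Fin N → ℝ) : ℝ :=
  ⨆ p : Fin N × Fin N, (Θ p.1 - Θ p.2)

section Helpers

lemma sin_lower' {c x : ℝ} (hc0 : 0 < c) (hcπ : c ≤ Real.pi) (hx0 : 0 ≤ x) (hx : x ≤ c) :
    (Real.sin c / c) * x ≤ Real.sin x := by
  have h := strictConcaveOn_sin_Icc.concaveOn.2
    (⟨hc0.le, hcπ⟩ : c ∈ Set.Icc (0:ℝ) Real.pi)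
    (⟨le_rfl, Real.pi_pos.le⟩ : (0:ℝ) ∈ Set.Icc (0:ℝ) Real.pi)
    (by positivity : (0:ℝ) ≤ x / c)
    (by rw [sub_nonneg]; exact div_le_one_of_le₀ hx hc0.le : (0:ℝ) ≤ 1 - x / c)
    (by ring : x / c + (1 - x / c) = 1)
  simp only [smul_eq_mul, mul_zero, Real.sin_zero, add_zero] at h
  have hxc : x / c * c = x := by field_simp
  rw [hxc] at h
  calc Real.sin c / c * x = x / c * Real.sin c := by ring
    _ ≤ Real.sin x := h

lemma trig_key' {S a b : ℝ} (hS0 : 0 < S) (hSπ : S < Real.pi) (hab : |a| + |b| ≤ S) :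
    (Real.sin S / S) * (a - b) ^ 2 ≤ (a - b) * (Real.sin a - Real.sin b) := by
  set u := (a + b) / 2 with hu
  set d := (a - b) / 2 with hd
  have hsub : Real.sin a - Real.sin b = 2 * Real.sin d * Real.cos u := Real.sin_sub_sin a b
  have hud : |u| ≤ S / 2 := by
    rw [hu, abs_div]
    have : |a + b| ≤ S := le_trans (abs_add_le a b) hab
    rw [abs_of_pos (by norm_num : (0:ℝ) < 2)]; linarith
  have hdd : |d| ≤ S / 2 := by
    rw [hd, abs_div]
    have : |a - b| ≤ S := le_trans (abs_sub a b) hab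
    rw [abs_of_pos (by norm_num : (0:ℝ) < 2)]; linarith
  have hS2π : S / 2 < Real.pi / 2 := by linarith
  have hcos : Real.cos (S / 2) ≤ Real.cos u := by
    rw [← Real.cos_abs u]
    exact Real.cos_le_cos_of_nonneg_of_le_pi (abs_nonneg u) (by linarith [Real.pi_pos]) hud
  have hcosS2 : 0 < Real.cos (S / 2) := Real.cos_pos_of_mem_Ioo ⟨by linarith, hS2π⟩
  have hsind : (Real.sin (S/2) / (S/2)) * d ^ 2 ≤ Real.sin d * d := by
    have key : (Real.sin (S/2) / (S/2)) * |d| ≤ Real.sin |d| :=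
      sin_lower' (by linarith) (by linarith [Real.pi_pos]) (abs_nonneg d) hdd
    have hds : Real.sin d * d = Real.sin |d| * |d| := by
      rcases le_or_gt 0 d with h | h
      · rw [abs_of_nonneg h]
      · rw [abs_of_neg h, Real.sin_neg]; ring
    rw [hds]
    have : (Real.sin (S/2) / (S/2)) * d ^ 2 = ((Real.sin (S/2) / (S/2)) * |d|) * |d| := by
      rw [mul_assoc, ← sq_abs d, sq]
    rw [this]
    exact mul_le_mul_of_nonneg_right key (abs_nonneg d)
  have hsindnn : 0 ≤ Real.sin d * d := by
    have h1 : 0 ≤ (Real.sin (S/2) / (S/2)) * d ^ 2 := by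
      have : 0 < Real.sin (S/2) :=
        Real.sin_pos_of_pos_of_lt_pi (by linarith) (by linarith [Real.pi_pos])
      positivity
    linarith
  have hsinS : Real.sin S = 2 * Real.sin (S/2) * Real.cos (S/2) := by
    rw [← Real.sin_two_mul]; ring_nf
  have hab2 : a - b = 2 * d := by rw [hd]; ring
  rw [hsub, hab2]
  have step : 4 * ((Real.sin (S/2) / (S/2)) * d ^ 2) * Real.cos (S/2)
      ≤ 4 * (Real.sin d * d) * Real.cos u := by
    have h1 : 4 * ((Real.sin (S/2) / (S/2)) * d ^ 2) * Real.cos (S/2)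
        ≤ 4 * (Real.sin d * d) * Real.cos (S/2) := by
      apply mul_le_mul_of_nonneg_right _ hcosS2.le
      linarith
    have h2 : 4 * (Real.sin d * d) * Real.cos (S/2) ≤ 4 * (Real.sin d * d) * Real.cos u := by
      apply mul_le_mul_of_nonneg_left hcos (by linarith)
    linarith
  have hEq : Real.sin S / S * (2*d) ^ 2
      = 4 * ((Real.sin (S/2) / (S/2)) * d ^ 2) * Real.cos (S/2) := by
    rw [hsinS]; field_simp; ring
  have hEq2 : 2*d * (2 * Real.sin d * Real.cos u) = 4 * (Real.sin d * d) * Real.cos u := by ring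
  rw [hEq, hEq2]; exact step

lemma sum_sq_sub' {N : ℕ} (y : Fin N → ℝ) :
    ∑ i, ∑ j, (y j - y i) ^ 2 = 2 * N * (∑ i, (y i) ^ 2) - 2 * (∑ i, y i) ^ 2 := by
  have h : ∀ i j : Fin N, (y j - y i) ^ 2 = y j ^ 2 + y i ^ 2 - 2 * (y j * y i) := by
    intros; ring
  simp_rw [h, Finset.sum_sub_distrib, Finset.sum_add_distrib, Finset.sum_const,
    Finset.card_univ, Fintype.card_fin, ← Finset.mul_sum, ← Finset.sum_mul, nsmul_eq_mul]
  rw [← Finset.mul_sum, ← Finset.mul_sum, sq (∑ i, y i), Finset.sum_mul]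
  ring

lemma sum_skew' {N : ℕ} (y : Fin N → ℝ) (z : Fin N → Fin N → ℝ)
    (hz : ∀ i j, z i j = - z j i) :
    ∑ i, ∑ j, y i * z i j = -(1/2) * ∑ i, ∑ j, (y j - y i) * z i j := by
  have h1 : ∑ i, ∑ j, y j * z i j = - ∑ i, ∑ j, y i * z i j := by
    calc ∑ i, ∑ j, y j * z i j = ∑ a, ∑ b, y a * z b a := Finset.sum_comm
      _ = ∑ a, ∑ b, -(y a * z a b) := Finset.sum_congr rfl fun a _ =>
            Finset.sum_congr rfl fun b _ => by rw [hz b a]; ring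
      _ = - ∑ i, ∑ j, y i * z i j := by simp
  have h2 : ∑ i, ∑ j, (y j - y i) * z i j
      = (∑ i, ∑ j, y j * z i j) - ∑ i, ∑ j, y i * z i j := by
    simp_rw [sub_mul, Finset.sum_sub_distrib]
  rw [h2, h1]; ring

lemma sum_sin_skew' {N : ℕ} (y : Fin N → ℝ) :
    ∑ i : Fin N, ∑ j, Real.sin (y j - y i) = 0 := by
  have h1 : ∑ i : Fin N, ∑ j, Real.sin (y j - y i)
      = - ∑ i : Fin N, ∑ j, Real.sin (y j - y i) := by
    calc ∑ i : Fin N, ∑ j, Real.sin (y j - y i)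
        = ∑ a : Fin N, ∑ b, Real.sin (y a - y b) := Finset.sum_comm
      _ = ∑ a : Fin N, ∑ b, -Real.sin (y b - y a) := Finset.sum_congr rfl fun a _ =>
            Finset.sum_congr rfl fun b _ => by rw [← Real.sin_neg, neg_sub]
      _ = - ∑ i : Fin N, ∑ j, Real.sin (y j - y i) := by simp
  linarith

lemma contDiff2_diff (f : ℝ → ℝ) (h : ContDiff ℝ 2 f) :
    Differentiable ℝ f ∧ Differentiable ℝ (deriv f) := by
  have h2 : ContDiff ℝ (1 + 1 : ℕ) f := by norm_num at h ⊢; exact h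
  rw [show ((1+1 : ℕ) : WithTop ℕ∞) = (1:WithTop ℕ∞) + 1 by norm_num] at h2
  have := contDiff_succ_iff_deriv.mp h2
  exact ⟨this.1, (this.2.2.differentiable one_ne_zero)⟩

lemma abs_sin_sub_sin' (a b : ℝ) : |Real.sin a - Real.sin b| ≤ |a - b| := by
  rw [Real.sin_sub_sin]
  calc |2 * Real.sin ((a-b)/2) * Real.cos ((a+b)/2)|
      = 2 * |Real.sin ((a-b)/2)| * |Real.cos ((a+b)/2)| := by
        rw [abs_mul, abs_mul]; norm_num
    _ ≤ 2 * |(a-b)/2| * 1 := by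
        apply mul_le_mul (by have := Real.abs_sin_le_abs (x := (a-b)/2); nlinarith)
          (Real.abs_cos_le_one _) (abs_nonneg _) (by positivity)
    _ = |a - b| := by rw [abs_div]; norm_num; ring

lemma const_of_deriv0' (g : ℝ → ℝ) (hg : Differentiable ℝ g)
    (h : ∀ t > (0:ℝ), deriv g t = 0) : ∀ t ≥ (0:ℝ), g t = g 0 := by
  intro t ht
  have hint : interior (Set.Ici (0:ℝ)) = Set.Ioi 0 := interior_Ici
  have hd : DifferentiableOn ℝ g (interior (Set.Ici (0:ℝ))) :=
    fun s _ => (hg s).differentiableWithinAt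
  have hmono : MonotoneOn g (Set.Ici (0:ℝ)) :=
    monotoneOn_of_deriv_nonneg (convex_Ici 0) hg.continuous.continuousOn hd
      (fun s hs => le_of_eq (h s (Set.mem_Ioi.mp (hint ▸ hs))).symm)
  have hanti : AntitoneOn g (Set.Ici (0:ℝ)) :=
    antitoneOn_of_deriv_nonpos (convex_Ici 0) hg.continuous.continuousOn hd
      (fun s hs => le_of_eq (h s (Set.mem_Ioi.mp (hint ▸ hs))))
  exact le_antisymm (hanti Set.self_mem_Ici ht ht) (hmono Set.self_mem_Ici ht ht)

lemma cs_abs' {α : Type*} [Fintype α] (f g : α → ℝ) :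
    ∑ p, |f p| * |g p|
      ≤ Real.sqrt (∑ p, f p ^ 2) * Real.sqrt (∑ p, g p ^ 2) := by
  have h := Finset.sum_mul_sq_le_sq_mul_sq Finset.univ (fun p => |f p|) (fun p => |g p|)
  have hsq : ∀ p : α, |f p| ^ 2 = f p ^ 2 := fun p => sq_abs _
  have hsq' : ∀ p : α, |g p| ^ 2 = g p ^ 2 := fun p => sq_abs _
  simp_rw [hsq, hsq'] at h
  have hnn : 0 ≤ ∑ p, |f p| * |g p| :=
    Finset.sum_nonneg fun p _ => mul_nonneg (abs_nonneg _) (abs_nonneg _)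
  calc ∑ p, |f p| * |g p| = Real.sqrt ((∑ p, |f p| * |g p|) ^ 2) := (Real.sqrt_sq hnn).symm
    _ ≤ Real.sqrt ((∑ p, f p ^ 2) * ∑ p, g p ^ 2) := Real.sqrt_le_sqrt h
    _ = Real.sqrt (∑ p, f p ^ 2) * Real.sqrt (∑ p, g p ^ 2) := Real.sqrt_mul
        (Finset.sum_nonneg fun p _ => sq_nonneg _) _

lemma gronwall_decay' (E : ℝ → ℝ) (hE : Differentiable ℝ E) (C : ℝ)
    (h : ∀ t ≥ (0:ℝ), deriv E t ≤ -C * E t) :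
    ∀ t ≥ (0:ℝ), E t ≤ E 0 * Real.exp (-C * t) := by
  intro t ht
  set G : ℝ → ℝ := fun s => E s * Real.exp (C * s) with hG
  have hGd : ∀ s : ℝ, HasDerivAt G (deriv E s * Real.exp (C * s)
      + E s * (Real.exp (C * s) * C)) s := by
    intro s
    have h1 : HasDerivAt E (deriv E s) s := (hE s).hasDerivAt
    have h2 : HasDerivAt (fun y : ℝ => C * y) (C * 1) s := (hasDerivAt_id s).const_mul C
    have h3 : HasDerivAt (fun y : ℝ => Real.exp (C * y)) (Real.exp (C * s) * (C * 1)) s :=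
      (Real.hasDerivAt_exp (C * s)).comp s h2
    have := h1.fun_mul h3
    simpa [mul_one, mul_comm, mul_assoc, mul_left_comm] using this
  have hGdiff : Differentiable ℝ G := fun s => (hGd s).differentiableAt
  have hanti : AntitoneOn G (Set.Ici (0:ℝ)) := by
    apply antitoneOn_of_deriv_nonpos (convex_Ici 0) hGdiff.continuous.continuousOn
      (fun s _ => (hGdiff s).differentiableWithinAt)
    intro s hs
    rw [interior_Ici] at hs
    rw [(hGd s).deriv]
    have hb := h s (le_of_lt hs)
    have hexp : 0 < Real.exp (C * s) := Real.exp_pos _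
    have : deriv E s * Real.exp (C * s) ≤ (-C * E s) * Real.exp (C * s) :=
      mul_le_mul_of_nonneg_right hb hexp.le
    nlinarith
  have hle : G t ≤ G 0 := hanti Set.self_mem_Ici ht ht
  have hG0 : G 0 = E 0 := by simp [hG]
  have hkey : E t * Real.exp (C * t) ≤ E 0 := hG0 ▸ hle
  have hexp : 0 < Real.exp (C * t) := Real.exp_pos _
  rw [show -C * t = -(C * t) by ring, Real.exp_neg]
  calc E t = (E t * Real.exp (C * t)) * (Real.exp (C * t))⁻¹ := by field_simp
    _ ≤ E 0 * (Real.exp (C * t))⁻¹ := by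
        apply mul_le_mul_of_nonneg_right _ (by positivity)
        linarith

end Helpers

set_option maxHeartbeats 2000000 in
/-- Exponential decay of the Lyapunov functional for the
difference of two solutions of the inertial Kuramoto model for identical
oscillators with all-to-all coupling: for `ε ∈ (κ/(2Γ̃), (2γ−1)/(2m))` there
exists `C₃ > 0` with `E_ε(t) ≤ E_ε(0)·e^{−C₃t}` for all `t ≥ 0`. -/
theorem kuramoto_inertia_lyapunov_exponential_decay
    (N : ℕ) (hN : 1 ≤ N)
    (m γ κ : ℝ) (hm : 0 < m) (hγpos : 0 < γ) (hκ : 0 < κ)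
    (θ θt : ℝ → Fin N → ℝ)
    (hreg : ∀ i, ContDiff ℝ 2 (fun t => θ t i))
    (hregt : ∀ i, ContDiff ℝ 2 (fun t => θt t i))
    (hode : ∀ t ≥ (0:ℝ), ∀ i,
      m * deriv (deriv (fun s => θ s i)) t
        = -γ * deriv (fun s => θ s i) t
          + (κ / N) * ∑ j, Real.sin (θ t j - θ t i))
    (hodet : ∀ t ≥ (0:ℝ), ∀ i,
      m * deriv (deriv (fun s => θt s i)) t
        = -γ * deriv (fun s => θt s i) t
          + (κ / N) * ∑ j, Real.sin (θt t j - θt t i))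
    (hθ0 : ∑ i, θ 0 i = 0) (hθt0 : ∑ i, θt 0 i = 0)
    (hω0 : ∑ i, deriv (fun s => θ s i) 0 = 0)
    (hωt0 : ∑ i, deriv (fun s => θt s i) 0 = 0)
    (hγ : 1 / 2 < γ)
    (S : ℝ) (hS0 : 0 < S) (hSπ : S < Real.pi)
    (hD : ∀ t ≥ (0:ℝ), phaseDiam (θ t) + phaseDiam (θt t) ≤ S)
    (Γt : ℝ) (hΓt : Γt = Real.sin S / S)
    (ε : ℝ) (hε1 : κ / (2 * Γt) < ε) (hε2 : ε < (2 * γ - 1) / (2 * m))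
    (X V : ℝ → Fin N → ℝ)
    (hX : X = fun t i => θ t i - θt t i)
    (hV : V = fun t i =>
      deriv (fun s => θ s i) t - deriv (fun s => θt s i) t)
    (Eε : ℝ → ℝ)
    (hEε : Eε = fun t =>
      ε * γ * (∑ i, (X t i) ^ 2) + 2 * m * ε * (∑ i, X t i * V t i)
        + m * (∑ i, (V t i) ^ 2)) :
    ∃ C₃ > (0:ℝ), ∀ t ≥ (0:ℝ), Eε t ≤ Eε 0 * Real.exp (-C₃ * t) := by
  -- abbreviations
  obtain ⟨x, hx⟩ : ∃ x : Fin N → ℝ → ℝ, x = fun i t => θ t i - θt t i := ⟨_, rfl⟩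
  obtain ⟨v, hv⟩ : ∃ v : Fin N → ℝ → ℝ,
      v = fun i t => deriv (fun s => θ s i) t - deriv (fun s => θt s i) t := ⟨_, rfl⟩
  obtain ⟨Fz, hFz⟩ : ∃ Fz : Fin N → ℝ → ℝ,
      Fz = fun i t => (κ / N) *
        ∑ j, (Real.sin (θ t j - θ t i) - Real.sin (θt t j - θt t i)) := ⟨_, rfl⟩
  -- basic positivity
  have hNpos : (0:ℝ) < N := by exact_mod_cast Nat.lt_of_lt_of_le Nat.zero_lt_one hN
  have hsinS : 0 < Real.sin S := Real.sin_pos_of_pos_of_lt_pi hS0 hSπ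
  have hΓpos : 0 < Γt := hΓt ▸ div_pos hsinS hS0
  have hεpos : 0 < ε := lt_trans (div_pos hκ (by positivity)) hε1
  have hmε : m * ε < γ - 1/2 := by
    have := (lt_div_iff₀ (by positivity : (0:ℝ) < 2*m)).mp hε2
    nlinarith
  have hκΓ : κ < 2 * ε * Γt := by
    have := (div_lt_iff₀ (by positivity : (0:ℝ) < 2*Γt)).mp hε1
    nlinarith
  -- differentiability facts
  have hθd : ∀ i, Differentiable ℝ (fun s => θ s i) := fun i => (contDiff2_diff _ (hreg i)).1
  have hθd2 : ∀ i, Differentiable ℝ (deriv (fun s => θ s i)) :=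
    fun i => (contDiff2_diff _ (hreg i)).2
  have hθtd : ∀ i, Differentiable ℝ (fun s => θt s i) := fun i => (contDiff2_diff _ (hregt i)).1
  have hθtd2 : ∀ i, Differentiable ℝ (deriv (fun s => θt s i)) :=
    fun i => (contDiff2_diff _ (hregt i)).2
  have hxv : ∀ i t, HasDerivAt (x i) (v i t) t := by
    rw [hx, hv]
    exact fun i t => ((hθd i t).hasDerivAt).sub ((hθtd i t).hasDerivAt)
  have hvdiff : ∀ i, Differentiable ℝ (v i) := by
    rw [hv]; exact fun i => (hθd2 i).sub (hθtd2 i)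
  have hvd : ∀ i t, HasDerivAt (v i) (deriv (v i) t) t := fun i t => (hvdiff i t).hasDerivAt
  have hvderiv : ∀ i t, deriv (v i) t
      = deriv (deriv (fun s => θ s i)) t - deriv (deriv (fun s => θt s i)) t := by
    intro i t
    rw [hv]
    exact (((hθd2 i t).hasDerivAt).sub ((hθtd2 i t).hasDerivAt)).deriv
  -- combined ODE for the difference
  have hmv : ∀ t ≥ (0:ℝ), ∀ i, m * deriv (v i) t = -γ * v i t + Fz i t := by
    intro t ht i
    rw [hvderiv i t]
    simp only [hv, hFz]
    have h1 := hode t ht i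
    have h2 := hodet t ht i
    rw [Finset.sum_sub_distrib, mul_sub, mul_sub, mul_sub]
    linarith
  -- sum of the coupling terms vanishes
  have hsumF : ∀ t, ∑ i, Fz i t = 0 := by
    intro t
    simp only [hFz]
    rw [← Finset.mul_sum]
    rw [show (∑ i : Fin N, ∑ j, (Real.sin (θ t j - θ t i) - Real.sin (θt t j - θt t i)))
        = (∑ i : Fin N, ∑ j, Real.sin (θ t j - θ t i))
          - ∑ i : Fin N, ∑ j, Real.sin (θt t j - θt t i) by
      simp_rw [Finset.sum_sub_distrib]]
    rw [sum_sin_skew' (θ t), sum_sin_skew' (θt t)]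
    ring
  -- conservation: sum of velocities vanishes for t ≥ 0
  have hw : ∀ t, HasDerivAt (fun s => ∑ i, v i s) (∑ i, deriv (v i) t) t :=
    fun t => HasDerivAt.fun_sum (fun i _ => hvd i t)
  have hwdiff : Differentiable ℝ (fun s => ∑ i, v i s) := fun t => (hw t).differentiableAt
  have hwode : ∀ t > (0:ℝ), deriv (fun s => ∑ i, v i s) t = -(γ/m) * (∑ i, v i t) := by
    intro t ht
    rw [(hw t).deriv]
    have hs : ∑ i, m * deriv (v i) t = ∑ i, (-γ * v i t + Fz i t) :=
      Finset.sum_congr rfl (fun i _ => hmv t ht.le i)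
    rw [← Finset.mul_sum] at hs
    rw [Finset.sum_add_distrib, ← Finset.mul_sum, hsumF t] at hs
    field_simp
    linarith
  have hw0 : (∑ i, v i 0) = 0 := by
    simp only [hv]
    rw [Finset.sum_sub_distrib, hω0, hωt0]
    ring
  have hwzero : ∀ t ≥ (0:ℝ), (∑ i, v i t) = 0 := by
    have hgwd : ∀ s : ℝ, HasDerivAt (fun r => (∑ i, v i r) * Real.exp ((γ/m) * r))
        (deriv (fun r => ∑ i, v i r) s * Real.exp ((γ/m)*s)
          + (∑ i, v i s) * (Real.exp ((γ/m)*s) * ((γ/m)*1))) s := by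
      intro s
      exact (hwdiff s).hasDerivAt.mul
        (((Real.hasDerivAt_exp ((γ/m)*s)).comp s ((hasDerivAt_id s).const_mul (γ/m))))
    have hgzero : ∀ s > (0:ℝ), deriv (fun r => (∑ i, v i r) * Real.exp ((γ/m) * r)) s = 0 := by
      intro s hs
      rw [(hgwd s).deriv, hwode s hs]
      ring
    intro t ht
    have hc := const_of_deriv0' _ (fun s => (hgwd s).differentiableAt) hgzero t ht
    simp only [mul_zero, Real.exp_zero, mul_one, hw0, zero_mul] at hc
    have hexp : Real.exp ((γ/m) * t) ≠ 0 := (Real.exp_pos _).ne'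
    exact (mul_eq_zero.mp hc).resolve_right hexp
  -- conservation: sum of phases differences vanishes for t ≥ 0
  have hσ : ∀ t, HasDerivAt (fun s => ∑ i, x i s) (∑ i, v i t) t :=
    fun t => HasDerivAt.fun_sum (fun i _ => hxv i t)
  have hσ0 : (∑ i, x i 0) = 0 := by
    simp only [hx]
    rw [Finset.sum_sub_distrib, hθ0, hθt0]
    ring
  have hxzero : ∀ t ≥ (0:ℝ), (∑ i, x i t) = 0 := by
    intro t ht
    have hc := const_of_deriv0' _ (fun s => (hσ s).differentiableAt)
      (fun s hs => by rw [(hσ s).deriv]; exact hwzero s hs.le) t ht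
    rw [hσ0] at hc
    exact hc
  -- Lyapunov functional in terms of x and v
  have hEeq : Eε = fun t =>
      ε * γ * (∑ i, (x i t) ^ 2) + 2 * m * ε * (∑ i, x i t * v i t)
        + m * (∑ i, (v i t) ^ 2) := by
    simp only [hEε, hX, hV, hx, hv]
  have hEhas : ∀ t, HasDerivAt Eε
      (ε*γ*(∑ i, 2 * x i t * v i t)
        + 2*m*ε*(∑ i, (v i t * v i t + x i t * deriv (v i) t))
        + m*(∑ i, 2 * v i t * deriv (v i) t)) t := by
    intro t
    rw [hEeq]
    have h1 : HasDerivAt (fun s => ∑ i, (x i s)^2) (∑ i, 2 * x i t * v i t) t := by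
      apply HasDerivAt.fun_sum
      intro i _
      simpa using (hxv i t).fun_pow 2
    have h2 : HasDerivAt (fun s => ∑ i, x i s * v i s)
        (∑ i, (v i t * v i t + x i t * deriv (v i) t)) t :=
      HasDerivAt.fun_sum (fun i _ => (hxv i t).mul (hvd i t))
    have h3 : HasDerivAt (fun s => ∑ i, (v i s)^2) (∑ i, 2 * v i t * deriv (v i) t) t := by
      apply HasDerivAt.fun_sum
      intro i _
      simpa using (hvd i t).fun_pow 2
    exact ((h1.const_mul (ε*γ)).add (h2.const_mul (2*m*ε))).add (h3.const_mul m)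
  have hEdiff : Differentiable ℝ Eε := fun t => (hEhas t).differentiableAt
  -- diameter bound
  have habs : ∀ (y : Fin N → ℝ) (i j : Fin N), |y j - y i| ≤ phaseDiam y := by
    intro y i j
    have hbdd : BddAbove (Set.range fun p : Fin N × Fin N => y p.1 - y p.2) :=
      Set.Finite.bddAbove (Set.finite_range _)
    have hne : Nonempty (Fin N) := ⟨⟨0, hN⟩⟩
    rw [abs_sub_le_iff]
    exact ⟨le_ciSup hbdd (j, i), le_ciSup hbdd (i, j)⟩
  -- constants
  obtain ⟨A, hAdef⟩ : ∃ A : ℝ, A = 2*ε*κ*Γt := ⟨_, rfl⟩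
  obtain ⟨B, hBdef⟩ : ∃ B : ℝ, B = 2*(γ - m*ε) := ⟨_, rfl⟩
  have hA : 0 < A := by rw [hAdef]; positivity
  have hB : 0 < B := by rw [hBdef]; linarith
  have hABne : A + B ≠ 0 := ne_of_gt (by linarith)
  have hABκ : κ^2 < A*B := by
    rw [hAdef, hBdef]
    have e1 : κ*κ < κ*(2*ε*Γt) := by nlinarith
    nlinarith [mul_pos hκ (by positivity : (0:ℝ) < 2*ε*Γt)]
  obtain ⟨cc, hccdef⟩ : ∃ cc : ℝ, cc = (A*B - κ^2)/(A+B) := ⟨_, rfl⟩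
  have hcc : 0 < cc := by
    rw [hccdef]; exact div_pos (by linarith) (by linarith)
  obtain ⟨M, hMdef⟩ : ∃ M : ℝ, M = ε*γ + m*ε + m := ⟨_, rfl⟩
  have hM : 0 < M := by rw [hMdef]; positivity
  have hAc : 0 < A - cc := by
    have h : A - cc = (A^2 + κ^2)/(A+B) := by
      rw [hccdef]; field_simp; ring
    rw [h]
    exact div_pos (by positivity) (by linarith)
  have hBc : 0 < B - cc := by
    have h : B - cc = (B^2 + κ^2)/(A+B) := by
      rw [hccdef]; field_simp; ring
    rw [h]
    exact div_pos (by positivity) (by linarith)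
  have hccmul : cc * (A+B) = A*B - κ^2 := by
    rw [hccdef, div_mul_cancel₀ _ hABne]
  have hprod : (A - cc)*(B - cc) = κ^2 + cc^2 := by
    have h : (A-cc)*(B-cc) = A*B - cc*(A+B) + cc^2 := by ring
    rw [h, hccmul]; ring
  -- the key differential inequality
  have key : ∀ t ≥ (0:ℝ), deriv Eε t ≤ -(cc/M) * Eε t := by
    intro t ht
    set p1 : ℝ := ∑ i, (x i t)^2 with hp1def
    set p2 : ℝ := ∑ i, x i t * v i t with hp2def
    set p3 : ℝ := ∑ i, (v i t)^2 with hp3def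
    set p4 : ℝ := ∑ i, x i t * Fz i t with hp4def
    set p5 : ℝ := ∑ i, v i t * Fz i t with hp5def
    have hp1nn : 0 ≤ p1 := Finset.sum_nonneg fun i _ => sq_nonneg _
    have hp3nn : 0 ≤ p3 := Finset.sum_nonneg fun i _ => sq_nonneg _
    -- derivative formula
    have hdvi : ∀ i, deriv (v i) t = (-γ * v i t + Fz i t)/m := by
      intro i
      have h := hmv t ht i
      field_simp
      linarith only [h]
    have hvv : (∑ i, v i t * v i t) = p3 := by
      rw [hp3def]; exact Finset.sum_congr rfl fun i _ => (sq (v i t)).symm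
    have e1 : ∑ i, 2 * x i t * v i t = 2 * p2 := by
      rw [hp2def, Finset.mul_sum]; exact Finset.sum_congr rfl fun i _ => by ring
    have e4 : ∑ i, x i t * deriv (v i) t = (-γ * p2 + p4)/m := by
      have h : ∀ i : Fin N, x i t * deriv (v i) t
          = (-γ*(x i t * v i t) + x i t * Fz i t)/m := by
        intro i; rw [hdvi i]; field_simp
      rw [Finset.sum_congr rfl (fun i _ => h i), ← Finset.sum_div,
        Finset.sum_add_distrib, ← Finset.mul_sum, ← hp2def, ← hp4def]
    have e5 : ∑ i, v i t * deriv (v i) t = (-γ * p3 + p5)/m := by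
      have h : ∀ i : Fin N, v i t * deriv (v i) t
          = (-γ*(v i t * v i t) + v i t * Fz i t)/m := by
        intro i; rw [hdvi i]; field_simp
      rw [Finset.sum_congr rfl (fun i _ => h i), ← Finset.sum_div,
        Finset.sum_add_distrib, ← Finset.mul_sum, hvv, ← hp5def]
    have e2 : ∑ i, (v i t * v i t + x i t * deriv (v i) t) = p3 + (-γ * p2 + p4)/m := by
      rw [Finset.sum_add_distrib, hvv, e4]
    have e3 : ∑ i, 2 * v i t * deriv (v i) t = 2 * ((-γ * p3 + p5)/m) := by
      rw [← e5, Finset.mul_sum]; exact Finset.sum_congr rfl fun i _ => by ring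
    have hDE : deriv Eε t = 2*m*ε*p3 - 2*γ*p3 + 2*ε*p4 + 2*p5 := by
      rw [(hEhas t).deriv, e1, e2, e3]
      field_simp
      ring
    -- estimate for p4
    have hxab : ∀ i j : Fin N, x j t - x i t = (θ t j - θ t i) - (θt t j - θt t i) := by
      intro i j; simp only [hx]; ring
    have hzskew : ∀ i j : Fin N,
        (Real.sin (θ t j - θ t i) - Real.sin (θt t j - θt t i))
          = -((Real.sin (θ t i - θ t j) - Real.sin (θt t i - θt t j))) := by
      intro i j
      rw [show θ t i - θ t j = -(θ t j - θ t i) by ring,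
        show θt t i - θt t j = -(θt t j - θt t i) by ring, Real.sin_neg, Real.sin_neg]
      ring
    have hpoint : ∀ i j : Fin N, Γt * (x j t - x i t)^2
        ≤ (x j t - x i t) * (Real.sin (θ t j - θ t i) - Real.sin (θt t j - θt t i)) := by
      intro i j
      have ha := habs (θ t) i j
      have hb := habs (θt t) i j
      have hsum := hD t ht
      have htr := trig_key' hS0 hSπ
        (a := θ t j - θ t i) (b := θt t j - θt t i) (by linarith only [ha, hb, hsum])
      rw [hxab i j, hΓt]
      exact htr
    have hp4 : p4 ≤ -(κ*Γt) * p1 := by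
      have hstep : p4 = (κ/N) * (-(1/2) * ∑ i, ∑ j, (x j t - x i t)
          * (Real.sin (θ t j - θ t i) - Real.sin (θt t j - θt t i))) := by
        rw [← sum_skew' (fun i => x i t)
          (fun i j => Real.sin (θ t j - θ t i) - Real.sin (θt t j - θt t i)) hzskew]
        rw [hp4def]
        simp only [hFz, Finset.mul_sum]
        exact Finset.sum_congr rfl fun i _ => Finset.sum_congr rfl fun j _ => by ring
      have hTlow : 2*N*Γt*p1 ≤ ∑ i, ∑ j, (x j t - x i t)
          * (Real.sin (θ t j - θ t i) - Real.sin (θt t j - θt t i)) := by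
        have h1 : ∑ i : Fin N, ∑ j, Γt * (x j t - x i t)^2
            ≤ ∑ i, ∑ j, (x j t - x i t)
              * (Real.sin (θ t j - θ t i) - Real.sin (θt t j - θt t i)) :=
          Finset.sum_le_sum fun i _ => Finset.sum_le_sum fun j _ => hpoint i j
        have h2 : ∑ i : Fin N, ∑ j, Γt * (x j t - x i t)^2
            = Γt * (2*N*p1 - 2*(∑ i, x i t)^2) := by
          simp_rw [← Finset.mul_sum]
          rw [sum_sq_sub' (fun i => x i t), hp1def]
        rw [h2, hxzero t ht] at h1
        calc 2*N*Γt*p1 = Γt * (2*N*p1 - 2*(0:ℝ)^2) := by ring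
          _ ≤ _ := h1
      rw [hstep]
      have hfac : (0:ℝ) ≤ κ/N := by positivity
      calc (κ/N) * (-(1/2) * ∑ i, ∑ j, (x j t - x i t)
            * (Real.sin (θ t j - θ t i) - Real.sin (θt t j - θt t i)))
          ≤ (κ/N) * (-(1/2) * (2*N*Γt*p1)) := by
            apply mul_le_mul_of_nonneg_left _ hfac
            linarith only [hTlow]
        _ = -(κ*Γt) * p1 := by field_simp
    -- estimate for p5
    have hp5 : p5 ≤ κ * Real.sqrt p1 * Real.sqrt p3 := by
      have hstep : p5 = (κ/N) * (-(1/2) * ∑ i, ∑ j, (v j t - v i t)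
          * (Real.sin (θ t j - θ t i) - Real.sin (θt t j - θt t i))) := by
        rw [← sum_skew' (fun i => v i t)
          (fun i j => Real.sin (θ t j - θ t i) - Real.sin (θt t j - θt t i)) hzskew]
        rw [hp5def]
        simp only [hFz, Finset.mul_sum]
        exact Finset.sum_congr rfl fun i _ => Finset.sum_congr rfl fun j _ => by ring
      have habsT : |∑ i, ∑ j, (v j t - v i t)
          * (Real.sin (θ t j - θ t i) - Real.sin (θt t j - θt t i))|
            ≤ ∑ i : Fin N, ∑ j, |v j t - v i t| * |x j t - x i t| := by
        calc |∑ i, ∑ j, (v j t - v i t)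
            * (Real.sin (θ t j - θ t i) - Real.sin (θt t j - θt t i))|
            ≤ ∑ i : Fin N, |∑ j, (v j t - v i t)
              * (Real.sin (θ t j - θ t i) - Real.sin (θt t j - θt t i))| :=
              Finset.abs_sum_le_sum_abs _ _
          _ ≤ ∑ i : Fin N, ∑ j, |(v j t - v i t)
              * (Real.sin (θ t j - θ t i) - Real.sin (θt t j - θt t i))| :=
              Finset.sum_le_sum fun i _ => Finset.abs_sum_le_sum_abs _ _
          _ ≤ ∑ i : Fin N, ∑ j, |v j t - v i t| * |x j t - x i t| := by
              apply Finset.sum_le_sum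
              intro i _
              apply Finset.sum_le_sum
              intro j _
              rw [abs_mul]
              apply mul_le_mul_of_nonneg_left _ (abs_nonneg _)
              rw [hxab i j]
              exact abs_sin_sub_sin' _ _
      have hcs : ∑ i : Fin N, ∑ j, |v j t - v i t| * |x j t - x i t|
          ≤ Real.sqrt (∑ i : Fin N, ∑ j, (v j t - v i t)^2)
            * Real.sqrt (∑ i : Fin N, ∑ j, (x j t - x i t)^2) := by
        have h := cs_abs' (fun p : Fin N × Fin N => v p.2 t - v p.1 t)
          (fun p : Fin N × Fin N => x p.2 t - x p.1 t)
        simpa only [Fintype.sum_prod_type] using h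
      have hvsq : (∑ i : Fin N, ∑ j, (v j t - v i t)^2) = 2*N*p3 := by
        rw [sum_sq_sub' (fun i => v i t), hwzero t ht, hp3def]
        ring
      have hxsq : (∑ i : Fin N, ∑ j, (x j t - x i t)^2) = 2*N*p1 := by
        rw [sum_sq_sub' (fun i => x i t), hxzero t ht, hp1def]
        ring
      rw [hvsq, hxsq] at hcs
      have hsqrtprod : Real.sqrt (2*N*p3) * Real.sqrt (2*N*p1)
          = (2*N) * (Real.sqrt p3 * Real.sqrt p1) := by
        rw [Real.sqrt_mul (by positivity : (0:ℝ) ≤ 2*N) p3,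
          Real.sqrt_mul (by positivity : (0:ℝ) ≤ 2*N) p1]
        rw [show Real.sqrt (2*N) * Real.sqrt p3 * (Real.sqrt (2*N) * Real.sqrt p1)
          = (Real.sqrt (2*N) * Real.sqrt (2*N)) * (Real.sqrt p3 * Real.sqrt p1) by ring]
        rw [Real.mul_self_sqrt (by positivity : (0:ℝ) ≤ 2*N)]
      rw [hstep]
      have hT := habsT.trans (hcs.trans_eq hsqrtprod)
      have hTlow : -(2*N*(Real.sqrt p3 * Real.sqrt p1))
          ≤ ∑ i, ∑ j, (v j t - v i t)
            * (Real.sin (θ t j - θ t i) - Real.sin (θt t j - θt t i)) := by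
        have := neg_abs_le (∑ i, ∑ j, (v j t - v i t)
          * (Real.sin (θ t j - θ t i) - Real.sin (θt t j - θt t i)))
        linarith only [this, hT]
      have hfac : (0:ℝ) ≤ κ/N := by positivity
      calc (κ/N) * (-(1/2) * ∑ i, ∑ j, (v j t - v i t)
            * (Real.sin (θ t j - θ t i) - Real.sin (θt t j - θt t i)))
          ≤ (κ/N) * (-(1/2) * (-(2*N*(Real.sqrt p3 * Real.sqrt p1)))) := by
            apply mul_le_mul_of_nonneg_left _ hfac
            linarith only [hTlow]
        _ = κ * Real.sqrt p1 * Real.sqrt p3 := by field_simp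
    -- quadratic form estimate
    have hPnn : 0 ≤ Real.sqrt p1 := Real.sqrt_nonneg _
    have hQnn : 0 ≤ Real.sqrt p3 := Real.sqrt_nonneg _
    have hP2 : Real.sqrt p1 ^ 2 = p1 := Real.sq_sqrt hp1nn
    have hQ2 : Real.sqrt p3 ^ 2 = p3 := Real.sq_sqrt hp3nn
    have hquad : 2*κ*(Real.sqrt p1)*(Real.sqrt p3)
        ≤ (A - cc)*p1 + (B - cc)*p3 := by
      have hκab : κ ≤ Real.sqrt ((A-cc)*(B-cc)) := by
        rw [hprod]
        exact (Real.le_sqrt' hκ).mpr (by linarith only [sq_nonneg cc])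
      have hsq2 : 2*(Real.sqrt (A-cc)*Real.sqrt p1)*(Real.sqrt (B-cc)*Real.sqrt p3)
          ≤ (Real.sqrt (A-cc)*Real.sqrt p1)^2 + (Real.sqrt (B-cc)*Real.sqrt p3)^2 :=
        two_mul_le_add_sq _ _
      have e1 : (Real.sqrt (A-cc)*Real.sqrt p1)^2 = (A-cc)*p1 := by
        rw [mul_pow, Real.sq_sqrt hAc.le, hP2]
      have e2 : (Real.sqrt (B-cc)*Real.sqrt p3)^2 = (B-cc)*p3 := by
        rw [mul_pow, Real.sq_sqrt hBc.le, hQ2]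
      have e3 : Real.sqrt (A-cc) * Real.sqrt (B-cc) = Real.sqrt ((A-cc)*(B-cc)) :=
        (Real.sqrt_mul hAc.le _).symm
      have h3 : 2*κ*(Real.sqrt p1*Real.sqrt p3)
          ≤ 2*(Real.sqrt ((A-cc)*(B-cc)))*(Real.sqrt p1*Real.sqrt p3) := by
        apply mul_le_mul_of_nonneg_right _ (mul_nonneg hPnn hQnn)
        linarith only [hκab]
      calc 2*κ*(Real.sqrt p1)*(Real.sqrt p3) = 2*κ*(Real.sqrt p1*Real.sqrt p3) := by ring
        _ ≤ 2*(Real.sqrt ((A-cc)*(B-cc)))*(Real.sqrt p1*Real.sqrt p3) := h3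
        _ = 2*(Real.sqrt (A-cc)*Real.sqrt p1)*(Real.sqrt (B-cc)*Real.sqrt p3) := by
            rw [← e3]; ring
        _ ≤ (Real.sqrt (A-cc)*Real.sqrt p1)^2 + (Real.sqrt (B-cc)*Real.sqrt p3)^2 := hsq2
        _ = (A-cc)*p1 + (B-cc)*p3 := by rw [e1, e2]
    have h1 : deriv Eε t ≤ -A*p1 - B*p3 + 2*κ*(Real.sqrt p1)*(Real.sqrt p3) := by
      rw [hDE, hAdef, hBdef]
      have h4 := mul_le_mul_of_nonneg_left hp4 (by positivity : (0:ℝ) ≤ 2*ε)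
      linarith only [h4, hp5]
    have h2 : -A*p1 - B*p3 + 2*κ*(Real.sqrt p1)*(Real.sqrt p3) ≤ -cc*(p1 + p3) := by
      linarith only [hquad]
    -- upper bound for Eε t
    have hEub : Eε t ≤ M*(p1+p3) := by
      have hEt : Eε t = ε*γ*p1 + 2*m*ε*p2 + m*p3 := by rw [hEeq]
      have h2p2 : 2*p2 ≤ p1 + p3 := by
        rw [hp2def, hp1def, hp3def, Finset.mul_sum, ← Finset.sum_add_distrib]
        exact Finset.sum_le_sum fun i _ => by
          linarith only [two_mul_le_add_sq (x i t) (v i t)]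
      rw [hEt, hMdef]
      have k1 : m*ε*(2*p2) ≤ m*ε*(p1+p3) :=
        mul_le_mul_of_nonneg_left h2p2 (by positivity)
      have k2 : 0 ≤ ε*γ*p3 := by positivity
      have k3 : 0 ≤ m*p1 := by positivity
      linarith only [k1, k2, k3, hp1nn, hp3nn]
    have h3 : cc/M * Eε t ≤ cc*(p1+p3) := by
      have hh := mul_le_mul_of_nonneg_left hEub (le_of_lt (div_pos hcc hM))
      calc cc/M * Eε t ≤ cc/M * (M*(p1+p3)) := hh
        _ = cc*(p1+p3) := by field_simp
    linarith only [h1, h2, h3]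
  exact ⟨cc/M, div_pos hcc hM, gronwall_decay' Eε hEdiff (cc/M) key⟩
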